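/- Let P be a nonzero real 3×3 skew-symmetric matrix and a, b ∈ ℝ³ vectors with P b = 0 and b ≠ 0. Then P a + g(a) b = 0 if and only if g(a) b = 0. (A regular point with dS ≠ 0 is an equilibrium of the metriplectic system ẋ = PdH + gdS if and only if it is an equilibrium of the gradient system ẋ = gdS.) -/

import Mathlib

open Matrix RealInnerProductSpace

/-- The dissipative tensor `g(a) = a ⊗ a − ‖a‖² I` of the paper, as a 3×3 matrix;
it acts by `g(a) v = ⟨a, v⟩ a − ‖a‖² v`. -/
noncomputable def gmat (a : EuclideanSpace ℝ (Fin 3)) : Matrix (Fin 3) (Fin 3) ℝ :=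
  Matrix.vecMulVec a a - (‖a‖ ^ 2) • 1

lemma vecMulVec_mulVec' (a b : Fin 3 → ℝ) :
    Matrix.vecMulVec a a *ᵥ b = (a ⬝ᵥ b) • a := by
  funext i
  simp [Matrix.mulVec, Matrix.vecMulVec_apply, dotProduct, Finset.mul_sum,
    mul_comm, mul_left_comm]

lemma key_lemma (a b : Fin 3 → ℝ) (h : b ⬝ᵥ ((a ⬝ᵥ b) • a - (a ⬝ᵥ a) • b) = 0) :
    (a ⬝ᵥ b) • a - (a ⬝ᵥ a) • b = 0 := by
  simp only [dotProduct_sub, dotProduct_smul, smul_eq_mul,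
    dotProduct_comm b a] at h
  apply dotProduct_self_eq_zero.mp
  simp only [dotProduct_sub, sub_dotProduct, dotProduct_smul,
    smul_dotProduct, smul_eq_mul, dotProduct_comm b a]
  linear_combination (-(a ⬝ᵥ a)) * h

lemma collinear_lemma (a b : Fin 3 → ℝ) (hb0 : b ≠ 0)
    (h : (a ⬝ᵥ b) • a - (a ⬝ᵥ a) • b = 0) : ∃ c : ℝ, a = c • b := by
  rw [sub_eq_zero] at h
  by_cases ha : a = 0
  · exact ⟨0, by simp [ha]⟩
  · have haa : a ⬝ᵥ a ≠ 0 := fun h' => ha (dotProduct_self_eq_zero.mp h')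
    have hab : a ⬝ᵥ b ≠ 0 := by
      intro h0
      rw [h0, zero_smul] at h
      rcases smul_eq_zero.mp h.symm with h1 | h1
      · exact haa h1
      · exact hb0 h1
    refine ⟨(a ⬝ᵥ b)⁻¹ * (a ⬝ᵥ a), ?_⟩
    have h2 := congrArg (fun v => (a ⬝ᵥ b)⁻¹ • v) h
    simp only [smul_smul] at h2
    rw [inv_mul_cancel₀ hab, one_smul] at h2
    exact h2

/-- A regular point with `dS ≠ 0` is an equilibrium of the metriplectic system iff it is an
equilibrium of the gradient system. -/
theorem metriplectic_equilibrium_iff_gradient (P : Matrix (Fin 3) (Fin 3) ℝ) (hP : Pᵀ = -P)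
    (hP0 : P ≠ 0) (a b : EuclideanSpace ℝ (Fin 3)) (hb : P *ᵥ b = 0) (hb0 : b ≠ 0) :
    P *ᵥ a + gmat a *ᵥ b = 0 ↔ gmat a *ᵥ b = 0 := by
  have hnorm : ‖a‖ ^ 2 = (a : Fin 3 → ℝ) ⬝ᵥ a := by
    rw [← real_inner_self_eq_norm_sq]
    simp only [PiLp.inner_apply, RCLike.inner_apply, conj_trivial, dotProduct]
  have hg : gmat a *ᵥ b = (((a : Fin 3 → ℝ) ⬝ᵥ b) • a - ((a : Fin 3 → ℝ) ⬝ᵥ a) • b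
      : Fin 3 → ℝ) := by
    rw [gmat, Matrix.sub_mulVec, Matrix.smul_mulVec, Matrix.one_mulVec, hnorm,
      vecMulVec_mulVec']
  have hb0' : (b : Fin 3 → ℝ) ≠ 0 := fun h' => hb0 ((WithLp.ofLp_eq_zero 2).mp h')
  constructor
  · intro h
    have hbPa : (b : Fin 3 → ℝ) ⬝ᵥ (P *ᵥ a) = 0 := by
      rw [Matrix.dotProduct_mulVec, ← Matrix.mulVec_transpose, hP, Matrix.neg_mulVec, hb]
      simp
    have hbu : (b : Fin 3 → ℝ) ⬝ᵥ (gmat a *ᵥ b) = 0 := by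
      have := congrArg (fun v => (b : Fin 3 → ℝ) ⬝ᵥ v) h
      simp only [dotProduct_add, hbPa, zero_add, dotProduct_zero] at this
      exact this
    rw [hg] at hbu ⊢
    exact key_lemma a b hbu
  · intro h
    rw [h, add_zero]
    rw [hg] at h
    obtain ⟨c, hc⟩ := collinear_lemma a b hb0' h
    have : a = (c • b : Fin 3 → ℝ) := hc
    rw [this, Matrix.mulVec_smul, hb, smul_zero]
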